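/- arXiv:1306.1224 — 7 statements merged into one kernel-verified Lean document; each statement's English description precedes it below -/
import Mathlib

section
/- Let X_1, ..., X_{r+1} be independent identically distributed real random variables, all of whose odd moments vanish (E[X_i^{2k+1}] = 0 for all k ∈ ℕ) and whose moments of all orders exist. Then for n ≥ 1, E[(X_1 + ⋯ + X_{r+1})^{2n}] = ((r+1)/n) · Σ_{k=1}^{n} C(2n, 2k) · k · E[X_1^{2k}] · E[(X_2 + ⋯ + X_{r+1})^{2n−2k}]. -/
open MeasureTheory ProbabilityTheory Finset

section Aux

variable {Ω : Type*} [MeasurableSpace Ω] {μ : Measure Ω} [IsProbabilityMeasure μ]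
  {r : ℕ} {X : Fin (r + 1) → Ω → ℝ}

private lemma aux_int (hmeas : ∀ i, Measurable (X i))
    (hindep : iIndepFun X μ)
    (hmom : ∀ i (m : ℕ), Integrable (fun ω => X i ω ^ m) μ) :
    ∀ (s : Finset (Fin (r + 1))) (m : ℕ),
      Integrable (fun ω => (∑ i ∈ s, X i ω) ^ m) μ := by
  intro s
  induction s using Finset.induction with
  | empty => intro m; simpa using integrable_const ((0 : ℝ) ^ m)
  | @insert i s hi ih =>
    intro m
    have hsum : (fun ω => ∑ x ∈ s, X x ω) = ∑ x ∈ s, X x := by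
      funext ω; simp
    have key : ∀ j : ℕ,
        Integrable (fun ω => X i ω ^ j * (∑ x ∈ s, X x ω) ^ (m - j)) μ := by
      intro j
      have h := (hindep.indepFun_finsetSum_of_notMem hmeas hi).symm
      have hind : IndepFun (fun ω => X i ω ^ j)
          (fun ω => (∑ x ∈ s, X x ω) ^ (m - j)) μ := by
        have := h.comp (measurable_id.pow_const j) (measurable_id.pow_const (m - j))
        simpa [hsum, Function.comp_def] using this
      exact hind.integrable_mul (hmom i j) (ih (m - j))
    have heq : (fun ω => (∑ x ∈ insert i s, X x ω) ^ m)
        = fun ω => ∑ j ∈ Finset.range (m + 1),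
            (X i ω ^ j * (∑ x ∈ s, X x ω) ^ (m - j)) * (m.choose j : ℝ) := by
      funext ω
      rw [Finset.sum_insert hi, add_pow]
    rw [heq]
    exact integrable_finset_sum _ fun j _ => (key j).mul_const _

private lemma aux_pair (hmeas : ∀ i, Measurable (X i))
    (hindep : iIndepFun X μ)
    (hmom : ∀ i (m : ℕ), Integrable (fun ω => X i ω ^ m) μ)
    {s : Finset (Fin (r + 1))} {i : Fin (r + 1)} (hi : i ∉ s) (a b : ℕ) :
    Integrable (fun ω => X i ω ^ a * (∑ x ∈ s, X x ω) ^ b) μ ∧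
    ∫ ω, X i ω ^ a * (∑ x ∈ s, X x ω) ^ b ∂μ
      = (∫ ω, X i ω ^ a ∂μ) * ∫ ω, (∑ x ∈ s, X x ω) ^ b ∂μ := by
  have hsum : (fun ω => ∑ x ∈ s, X x ω) = ∑ x ∈ s, X x := by
    funext ω; simp
  have h := (hindep.indepFun_finsetSum_of_notMem hmeas hi).symm
  have hind : IndepFun (fun ω => X i ω ^ a)
      (fun ω => (∑ x ∈ s, X x ω) ^ b) μ := by
    have := h.comp (measurable_id.pow_const a) (measurable_id.pow_const b)
    simpa [hsum, Function.comp_def] using this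
  refine ⟨hind.integrable_mul (hmom i a) (aux_int hmeas hindep hmom s b), ?_⟩
  exact hind.integral_fun_mul_eq_mul_integral (hmom i a).aestronglyMeasurable (aux_int hmeas hindep hmom s b).aestronglyMeasurable

/-- Binomial expansion of a weighted moment. -/
private lemma aux_expand (hmeas : ∀ i, Measurable (X i))
    (hindep : iIndepFun X μ)
    (hmom : ∀ i (m : ℕ), Integrable (fun ω => X i ω ^ m) μ)
    {s : Finset (Fin (r + 1))} {i : Fin (r + 1)} (hi : i ∉ s) (a m : ℕ) :
    ∫ ω, X i ω ^ a * (X i ω + ∑ x ∈ s, X x ω) ^ m ∂μ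
      = ∑ j ∈ Finset.range (m + 1), (m.choose j : ℝ) *
          ((∫ ω, X i ω ^ (a + j) ∂μ) * ∫ ω, (∑ x ∈ s, X x ω) ^ (m - j) ∂μ) := by
  have h1 : (fun ω => X i ω ^ a * (X i ω + ∑ x ∈ s, X x ω) ^ m)
      = fun ω => ∑ j ∈ Finset.range (m + 1),
          (X i ω ^ (a + j) * (∑ x ∈ s, X x ω) ^ (m - j)) * (m.choose j : ℝ) := by
    funext ω
    rw [add_pow, Finset.mul_sum]
    refine Finset.sum_congr rfl fun j _ => ?_
    rw [pow_add]; ring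
  rw [h1, integral_finset_sum _
    (fun j _ => ((aux_pair hmeas hindep hmom hi (a + j) (m - j)).1).mul_const _)]
  refine Finset.sum_congr rfl fun j _ => ?_
  rw [integral_mul_const, (aux_pair hmeas hindep hmom hi (a + j) (m - j)).2]
  ring

/-- Moments of sums only depend on the cardinality of the index set. -/
private lemma aux_card (hmeas : ∀ i, Measurable (X i))
    (hindep : iIndepFun X μ)
    (hident : ∀ i, IdentDistrib (X i) (X 0) μ μ)
    (hmom : ∀ i (m : ℕ), Integrable (fun ω => X i ω ^ m) μ) :
    ∀ (c : ℕ) (s t : Finset (Fin (r + 1))), s.card = c → t.card = c → ∀ m : ℕ,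
      ∫ ω, (∑ x ∈ s, X x ω) ^ m ∂μ = ∫ ω, (∑ x ∈ t, X x ω) ^ m ∂μ := by
  intro c
  induction c with
  | zero =>
    intro s t hs ht m
    rw [Finset.card_eq_zero] at hs ht
    subst hs; subst ht; rfl
  | succ c ih =>
    intro s t hs ht m
    obtain ⟨i, hi⟩ : s.Nonempty := Finset.card_pos.mp (by omega)
    obtain ⟨i', hi'⟩ : t.Nonempty := Finset.card_pos.mp (by omega)
    have hs' : (s.erase i).card = c := by
      rw [Finset.card_erase_of_mem hi, hs]
      omega
    have ht' : (t.erase i').card = c := by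
      rw [Finset.card_erase_of_mem hi', ht]
      omega
    
    have moment_eq : ∀ (j : ℕ), ∫ ω, X i ω ^ j ∂μ = ∫ ω, X i' ω ^ j ∂μ := by
      intro j
      have h1 := ((hident i).comp (measurable_id.pow_const j)).integral_eq
      have h2 := ((hident i').comp (measurable_id.pow_const j)).integral_eq
      simpa [Function.comp_def] using h1.trans h2.symm
    have e1 : ∫ ω, (∑ x ∈ s, X x ω) ^ m ∂μ
        = ∑ j ∈ Finset.range (m + 1), (m.choose j : ℝ) *
            ((∫ ω, X i ω ^ j ∂μ) * ∫ ω, (∑ x ∈ s.erase i, X x ω) ^ (m - j) ∂μ) := by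
      have hrw : ∀ ω, ∑ x ∈ s, X x ω = X i ω + ∑ x ∈ s.erase i, X x ω :=
        fun ω => (Finset.add_sum_erase s (fun x => X x ω) hi).symm
      simp only [hrw]
      have := aux_expand hmeas hindep hmom (Finset.notMem_erase i s) 0 m
      simpa using this
    have e2 : ∫ ω, (∑ x ∈ t, X x ω) ^ m ∂μ
        = ∑ j ∈ Finset.range (m + 1), (m.choose j : ℝ) *
            ((∫ ω, X i' ω ^ j ∂μ) * ∫ ω, (∑ x ∈ t.erase i', X x ω) ^ (m - j) ∂μ) := by
      have hrw : ∀ ω, ∑ x ∈ t, X x ω = X i' ω + ∑ x ∈ t.erase i', X x ω :=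
        fun ω => (Finset.add_sum_erase t (fun x => X x ω) hi').symm
      simp only [hrw]
      have := aux_expand hmeas hindep hmom (Finset.notMem_erase i' t) 0 m
      simpa using this
    rw [e1, e2]
    refine Finset.sum_congr rfl fun j _ => ?_
    rw [moment_eq j, ih (s.erase i) (t.erase i') hs' ht' (m - j)]

private lemma sum_range_pair (f : ℕ → ℝ) (n : ℕ) :
    ∑ j ∈ Finset.range (2 * n), f j
      = ∑ k ∈ Finset.range n, (f (2 * k) + f (2 * k + 1)) := by
  induction n with
  | zero => simp
  | succ n ih =>
    have : 2 * (n + 1) = (2 * n + 1) + 1 := by ring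
    rw [this, Finset.sum_range_succ, Finset.sum_range_succ, ih, Finset.sum_range_succ]
    ring

end Aux

/-- Probabilistic version of Euler's identity: for i.i.d. random variables
`X₁,…,X_{r+1}` with all moments finite and vanishing odd moments,
`E[(X₁+⋯+X_{r+1})^{2n}] = ((r+1)/n) Σ_{k=1}^n C(2n,2k) k E[X₁^{2k}] E[(X₂+⋯+X_{r+1})^{2n-2k}]`. -/
theorem even_moment_recurrence {Ω : Type*} [MeasurableSpace Ω] (μ : Measure Ω)
    [IsProbabilityMeasure μ] (r : ℕ) (X : Fin (r + 1) → Ω → ℝ)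
    (hmeas : ∀ i, Measurable (X i))
    (hindep : iIndepFun X μ)
    (hident : ∀ i, IdentDistrib (X i) (X 0) μ μ)
    (hmom : ∀ i (m : ℕ), Integrable (fun ω => X i ω ^ m) μ)
    (hodd : ∀ k : ℕ, ∫ ω, X 0 ω ^ (2 * k + 1) ∂μ = 0)
    (n : ℕ) (hn : 1 ≤ n) :
    ∫ ω, (∑ i, X i ω) ^ (2 * n) ∂μ =
      ((r + 1 : ℝ) / n) *
        ∑ k ∈ Finset.Icc 1 n,
          ((2 * n).choose (2 * k) : ℝ) * (k : ℝ) * (∫ ω, X 0 ω ^ (2 * k) ∂μ) *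
            ∫ ω, (∑ i ∈ Finset.univ.erase 0, X i ω) ^ (2 * n - 2 * k) ∂μ := by
  classical
  set m : ℕ := 2 * n - 1 with hm
  have hm1 : 2 * n = m + 1 := by omega
  have moment_eq : ∀ (i : Fin (r + 1)) (j : ℕ),
      ∫ ω, X i ω ^ j ∂μ = ∫ ω, X 0 ω ^ j ∂μ := by
    intro i j
    have h1 := ((hident i).comp (measurable_id.pow_const j)).integral_eq
    simpa [Function.comp_def] using h1
  -- the common value for each i
  set A : ℝ := ∑ j ∈ Finset.range (m + 1), (m.choose j : ℝ) *
      ((∫ ω, X 0 ω ^ (1 + j) ∂μ) *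
        ∫ ω, (∑ x ∈ Finset.univ.erase (0 : Fin (r + 1)), X x ω) ^ (m - j) ∂μ) with hA
  have term_val : ∀ i : Fin (r + 1),
      ∫ ω, X i ω * (∑ x, X x ω) ^ m ∂μ = A := by
    intro i
    have hrw : ∀ ω : Ω, ∑ x, X x ω = X i ω + ∑ x ∈ Finset.univ.erase i, X x ω :=
      fun ω => (Finset.add_sum_erase _ (fun x => X x ω) (Finset.mem_univ i)).symm
    have h1 : (fun ω => X i ω * (∑ x, X x ω) ^ m)
        = fun ω => X i ω ^ 1 * (X i ω + ∑ x ∈ Finset.univ.erase i, X x ω) ^ m := by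
      funext ω; rw [hrw ω, pow_one]
    rw [h1, aux_expand hmeas hindep hmom (Finset.notMem_erase i _) 1 m]
    refine Finset.sum_congr rfl fun j _ => ?_
    rw [moment_eq i (1 + j),
      aux_card hmeas hindep hident hmom r (Finset.univ.erase i)
        (Finset.univ.erase 0) (by simp) (by simp) (m - j)]
  have term_int : ∀ i : Fin (r + 1),
      Integrable (fun ω => X i ω * (∑ x, X x ω) ^ m) μ := by
    intro i
    have hrw : ∀ ω : Ω, ∑ x, X x ω = X i ω + ∑ x ∈ Finset.univ.erase i, X x ω :=
      fun ω => (Finset.add_sum_erase _ (fun x => X x ω) (Finset.mem_univ i)).symm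
    have h1 : (fun ω => X i ω * (∑ x, X x ω) ^ m)
        = fun ω => ∑ j ∈ Finset.range (m + 1),
            (X i ω ^ (1 + j) * (∑ x ∈ Finset.univ.erase i, X x ω) ^ (m - j))
              * (m.choose j : ℝ) := by
      funext ω
      rw [hrw ω, add_pow, Finset.mul_sum]
      refine Finset.sum_congr rfl fun j _ => ?_
      rw [pow_add, pow_one]; ring
    rw [h1]
    exact integrable_finset_sum _ fun j _ =>
      ((aux_pair hmeas hindep hmom (Finset.notMem_erase i _) (1 + j) (m - j)).1).mul_const _
  -- Step 1 : E[S^{2n}] = (r+1) * A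
  have step1 : ∫ ω, (∑ i, X i ω) ^ (2 * n) ∂μ = (r + 1 : ℝ) * A := by
    have h1 : (fun ω => (∑ i, X i ω) ^ (2 * n))
        = fun ω => ∑ i, X i ω * (∑ x, X x ω) ^ m := by
      funext ω
      rw [hm1, pow_succ', ← Finset.sum_mul]
    rw [h1, integral_finset_sum _ fun i _ => term_int i]
    rw [Finset.sum_congr rfl fun i _ => term_val i]
    simp [Finset.card_univ, mul_comm]
  -- Step 2 : kill even-index terms and reindex
  have step2 : A = ∑ k ∈ Finset.range n, ((m.choose (2 * k + 1) : ℝ) *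
      ((∫ ω, X 0 ω ^ (2 * (1 + k)) ∂μ) *
        ∫ ω, (∑ x ∈ Finset.univ.erase (0 : Fin (r + 1)), X x ω) ^ (2 * n - 2 * (1 + k)) ∂μ)) := by
    have hm2 : m + 1 = 2 * n := by omega
    rw [hA, hm2, sum_range_pair]
    refine Finset.sum_congr rfl fun k hk => ?_
    have hkn : k < n := Finset.mem_range.mp hk
    have hz : (1 + 2 * k) = 2 * k + 1 := by omega
    have hz2 : (1 + (2 * k + 1)) = 2 * (1 + k) := by omega
    have hz3 : m - (2 * k + 1) = 2 * n - 2 * (1 + k) := by omega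
    rw [hz, hodd k, hz2, hz3]
    ring
  rw [step1, step2]
  -- Step 3 : reindex the RHS sum and conclude by the binomial identity
  have hIcc : Finset.Icc 1 n = Finset.Ico 1 (n + 1) := rfl
  rw [hIcc, Finset.sum_Ico_eq_sum_range]
  have hn1 : n + 1 - 1 = n := by omega
  rw [hn1]
  have hn0 : (n : ℝ) ≠ 0 := Nat.cast_ne_zero.mpr (by omega)
  rw [div_mul_eq_mul_div, Finset.mul_sum, Finset.mul_sum, eq_div_iff hn0,
    Finset.sum_mul]
  refine Finset.sum_congr rfl fun k hk => ?_
  have hchoose : (n : ℝ) * (m.choose (2 * k + 1) : ℝ)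
      = ((2 * n).choose (2 * (1 + k)) : ℝ) * ((1 + k : ℕ) : ℝ) := by
    have h := Nat.add_one_mul_choose_eq m (2 * k + 1)
    have hms : m + 1 = 2 * n := by omega
    rw [hms] at h
    -- h : 2 * n * m.choose (2*k+1) = (2*n).choose (2*k+2) * (2*k+2)
    have h2 : 2 * (n * m.choose (2 * k + 1))
        = 2 * ((2 * n).choose (2 * (1 + k)) * (1 + k)) := by
      have e1 : 2 * (1 + k) = (2 * k + 1) + 1 := by omega
      rw [e1]
      calc 2 * (n * m.choose (2 * k + 1)) = 2 * n * m.choose (2 * k + 1) := by ring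
        _ = (2 * n).choose (2 * k + 1 + 1) * (2 * k + 1 + 1) := h
        _ = 2 * ((2 * n).choose (2 * k + 1 + 1) * (1 + k)) := by ring
    have h3 : n * m.choose (2 * k + 1) = (2 * n).choose (2 * (1 + k)) * (1 + k) :=
      Nat.eq_of_mul_eq_mul_left (by norm_num) h2
    exact_mod_cast congrArg (fun x : ℕ => (x : ℝ)) h3
  push_cast at hchoose ⊢
  linear_combination ((r : ℝ) + 1) * (∫ ω, X 0 ω ^ (2 * (1 + k)) ∂μ) *
    (∫ ω, (∑ x ∈ Finset.univ.erase (0 : Fin (r + 1)), X x ω) ^ (2 * n - 2 * (1 + k)) ∂μ) * hchoose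
end

section
/- Define the polynomials B_n^{(ν)}(r) by the recurrence B_0^{(ν)}(r) = 1 and B_n^{(ν)}(r+1) = Σ_{j=0}^{n} C(n,j) · (n+ν)! ν! / ((ν+j)! (n−j+ν)!) · B_j^{(ν)}(r) for r ∈ ℕ. Then for each n, r ↦ B_n^{(ν)}(r) agrees with a polynomial in r of degree n. -/
open Finset Polynomial

lemma descPoch_diff (d : ℕ) (x : ℝ) :
    (descPochhammer ℝ (d+1)).eval (x+1) =
      (descPochhammer ℝ (d+1)).eval x + (d+1) * (descPochhammer ℝ d).eval x := by
  have h1 : (descPochhammer ℝ (d+1)).eval (x+1) = (x+1) * (descPochhammer ℝ d).eval x := by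
    rw [descPochhammer_succ_left, eval_mul, eval_X, eval_comp]
    simp
  rw [h1, descPochhammer_succ_eval]
  ring

lemma antideriv (q : Polynomial ℝ) :
    ∃ p : Polynomial ℝ, p.degree = q.degree + 1 ∧ p.eval 0 = 0 ∧
      ∀ x : ℝ, p.eval (x+1) = p.eval x + q.eval x := by
  suffices H : ∀ (N : ℕ) (q : Polynomial ℝ), q.natDegree ≤ N →
      ∃ p : Polynomial ℝ, p.degree = q.degree + 1 ∧ p.eval 0 = 0 ∧
        ∀ x : ℝ, p.eval (x+1) = p.eval x + q.eval x from H q.natDegree q le_rfl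
  intro N
  induction N using Nat.strong_induction_on with
  | _ N ihN =>
  intro q hqN
  by_cases h0 : q = 0
  · exact ⟨0, by simp [h0], by simp, by simp [h0]⟩
  set d := q.natDegree with hd
  set c := q.leadingCoeff with hc
  have hcne : c ≠ 0 := leadingCoeff_ne_zero.mpr h0
  set D : Polynomial ℝ := descPochhammer ℝ d with hD
  have hDdeg : D.degree = (d : WithBot ℕ) := by
    rw [hD, degree_eq_natDegree (monic_descPochhammer ℝ d).ne_zero, descPochhammer_natDegree]
  set r : Polynomial ℝ := q - C c * D with hr
  have hCDdeg : (C c * D).degree = q.degree := by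
    rw [degree_C_mul hcne, hDdeg, degree_eq_natDegree h0]
  have hrdeg : r.degree < q.degree := by
    apply degree_sub_lt hCDdeg.symm h0
    rw [leadingCoeff_mul, leadingCoeff_C, (monic_descPochhammer ℝ d).leadingCoeff, mul_one]
  obtain ⟨pr, hprdeg, hpr0, hprΔ⟩ :
      ∃ pr : Polynomial ℝ, pr.degree = r.degree + 1 ∧ pr.eval 0 = 0 ∧
        ∀ x : ℝ, pr.eval (x+1) = pr.eval x + r.eval x := by
    by_cases hr0 : r = 0
    · exact ⟨0, by simp [hr0], by simp, by simp [hr0]⟩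
    · have hrd : r.natDegree < d := by
        rw [← Nat.cast_lt (α := WithBot ℕ), ← degree_eq_natDegree hr0, ← degree_eq_natDegree h0]
        exact hrdeg
      exact ihN r.natDegree (lt_of_lt_of_le hrd hqN) r le_rfl
  have hd1 : ((d : ℝ) + 1) ≠ 0 := by positivity
  refine ⟨C (c / (d+1)) * descPochhammer ℝ (d+1) + pr, ?_, ?_, ?_⟩
  · have h1 : (C (c / (d+1)) * descPochhammer ℝ (d+1)).degree = ((d + 1 : ℕ) : WithBot ℕ) := by
      rw [degree_C_mul (div_ne_zero hcne hd1),
        degree_eq_natDegree (monic_descPochhammer ℝ (d+1)).ne_zero, descPochhammer_natDegree]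
    have h2 : pr.degree < ((d + 1 : ℕ) : WithBot ℕ) := by
      rw [hprdeg]
      rcases eq_or_ne r 0 with h | h
      · simp only [h, degree_zero, WithBot.bot_add]
        exact_mod_cast WithBot.bot_lt_coe (d+1)
      · rw [degree_eq_natDegree h]
        have hrd : r.natDegree < d := by
          rw [← Nat.cast_lt (α := WithBot ℕ), ← degree_eq_natDegree h, ← degree_eq_natDegree h0]
          exact hrdeg
        exact_mod_cast Nat.add_lt_add_right hrd 1
    rw [degree_add_eq_left_of_degree_lt (h1 ▸ h2), h1, degree_eq_natDegree h0]
    push_cast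
    rfl
  · simp [descPochhammer_eval_zero, hpr0]
  · intro x
    have hqeq : q = C c * D + r := by rw [hr]; ring
    rw [eval_add, eval_add, eval_mul, eval_mul, descPoch_diff d x, hprΔ, hqeq]
    simp only [eval_add, eval_mul, eval_C, hD]
    field_simp
    ring

/-- The coefficients `B_n^{(ν)}(r)`, defined by `B_0 = 1`, `B_n(0) = 0` for `n ≥ 1`,
and the recurrence `B_n(r+1) = Σ_j C(n,j) (n+ν)! ν! /((ν+j)!(n−j+ν)!) B_j(r)`,
agree with polynomials in `r` of degree `n`. -/
theorem B_is_polynomial (ν : ℕ) (B : ℕ → ℕ → ℝ)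
    (hB0 : ∀ r, B 0 r = 1)
    (hBinit : ∀ n, 1 ≤ n → B n 0 = 0)
    (hrec : ∀ n r, B n (r + 1) =
      ∑ j ∈ Finset.range (n + 1),
        (n.choose j : ℝ) *
          (((n + ν).factorial : ℝ) * (ν.factorial : ℝ) /
            (((ν + j).factorial : ℝ) * ((n - j + ν).factorial : ℝ))) * B j r)
    (n : ℕ) :
    ∃ p : Polynomial ℝ, p.degree = n ∧ ∀ r : ℕ, B n r = p.eval (r : ℝ) := by
  induction n using Nat.strong_induction_on with
  | _ n ih =>
  rcases Nat.eq_zero_or_pos n with rfl | hn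
  · exact ⟨Polynomial.C 1, by simp, fun r => by simp [hB0]⟩
  set c : ℕ → ℝ := fun j => (n.choose j : ℝ) *
      (((n + ν).factorial : ℝ) * (ν.factorial : ℝ) /
        (((ν + j).factorial : ℝ) * ((n - j + ν).factorial : ℝ))) with hcdef
  choose p hpdeg hpval using fun j (h : j < n) => ih j h
  set f : ℕ → Polynomial ℝ := fun j => C (c j) * (if h : j < n then p j h else 0) with hf
  set q : Polynomial ℝ := ∑ j ∈ range n, f j with hq
  have hqval : ∀ r : ℕ, q.eval (r : ℝ) = ∑ j ∈ range n, c j * B j r := by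
    intro r
    rw [hq, eval_finset_sum]
    refine Finset.sum_congr rfl fun j hj => ?_
    have hjn : j < n := mem_range.mp hj
    rw [hf]
    simp only
    rw [dif_pos hjn, eval_mul, eval_C, hpval j hjn]
  have hn1 : n - 1 + 1 = n := Nat.succ_pred_eq_of_pos hn
  have hlt : n - 1 < n := Nat.sub_lt hn one_pos
  have hqdeg : q.degree = ((n - 1 : ℕ) : WithBot ℕ) := by
    have hsplit : q = (∑ j ∈ range (n-1), f j) + f (n-1) := by
      have h := Finset.sum_range_succ f (n-1)
      rw [hn1] at h
      rw [hq, h]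
    have hcne : c (n-1) ≠ 0 := by
      rw [hcdef]
      have h1 : (n.choose (n-1) : ℝ) ≠ 0 := by
        exact_mod_cast (Nat.choose_pos hlt.le).ne'
      positivity
    have hterm : (f (n-1)).degree = ((n - 1 : ℕ) : WithBot ℕ) := by
      rw [hf]; simp only
      rw [dif_pos hlt, degree_C_mul hcne, hpdeg (n-1) hlt]
    have hrest : (∑ j ∈ range (n-1), f j).degree < ((n - 1 : ℕ) : WithBot ℕ) := by
      refine lt_of_le_of_lt (degree_sum_le _ _) ?_
      rw [Finset.sup_lt_iff (by exact_mod_cast WithBot.bot_lt_coe (n-1))]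
      intro j hj
      have hjn1 : j < n - 1 := mem_range.mp hj
      have hjn : j < n := hjn1.trans hlt
      calc (f j).degree ≤ (C (c j)).degree + (if h : j < n then p j h else 0).degree :=
            degree_mul_le _ _
        _ ≤ 0 + (j : WithBot ℕ) := by
            refine add_le_add degree_C_le ?_
            rw [dif_pos hjn, hpdeg j hjn]
        _ = (j : WithBot ℕ) := zero_add _
        _ < _ := by exact_mod_cast hjn1
    rw [hsplit, degree_add_eq_right_of_degree_lt (by rw [hterm]; exact hrest), hterm]
  obtain ⟨P, hPdeg, hP0, hPΔ⟩ := antideriv q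
  have hPdeg' : P.degree = (n : WithBot ℕ) := by
    rw [hPdeg, hqdeg]
    have h1 : ((n - 1 : ℕ) : WithBot ℕ) + 1 = ((n - 1 + 1 : ℕ) : WithBot ℕ) := by push_cast; rfl
    rw [h1, hn1]
  refine ⟨P, hPdeg', fun r => ?_⟩
  induction r with
  | zero => simpa [hP0] using hBinit n hn
  | succ r ihr =>
    have hcn : (n.choose n : ℝ) *
        (((n + ν).factorial : ℝ) * (ν.factorial : ℝ) /
          (((ν + n).factorial : ℝ) * ((n - n + ν).factorial : ℝ))) = 1 := by
      rw [Nat.choose_self, Nat.sub_self, Nat.cast_one, one_mul, zero_add, add_comm ν n, div_self]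
      positivity
    rw [hrec n r, Finset.sum_range_succ, hcn, one_mul, ← hqval r]
    push_cast
    rw [hPΔ, ihr]
    ring
end

section
/- Let Ĩ_ν(z) = Σ_{k≥0} ν!/(k!(k+ν)!) (z/2)^{2k} be the normalized modified Bessel function with ν a nonnegative integer, and define a_n(r) = (−1)^{n−1}(n−1)! ζ_ν(2n) r, where ζ_ν(2n) are the coefficients in log Ĩ_ν(z) = Σ_{p≥1} ((−1)^{p+1}/p) ζ_ν(2p) z^{2p} (as formal power series). Then the coefficients B_n^{(ν)}(r) in Ĩ_ν(z)^r = Σ_{k≥0} ν!/(k!(k+ν)!) B_k^{(ν)}(r)(z/2)^{2k} satisfy B_n^{(ν)}(r) = 2^{2n} (n+ν)!/ν! · 𝔅_n(a_1(r),…,a_n(r)). -/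
open Finset

noncomputable def Eexp (F : PowerSeries ℝ) : PowerSeries ℝ :=
  PowerSeries.mk fun n => ∑ j ∈ Finset.range (n + 1),
    ((j.factorial : ℝ))⁻¹ * PowerSeries.coeff (R := ℝ) n (F ^ j)

lemma coeff_pow_eq_zero' {F : PowerSeries ℝ} (hF : PowerSeries.constantCoeff (R := ℝ) F = 0)
    {a j : ℕ} (h : a < j) : PowerSeries.coeff (R := ℝ) a (F ^ j) = 0 := by
  have : (PowerSeries.X : PowerSeries ℝ) ^ j ∣ F ^ j :=
    pow_dvd_pow_of_dvd (PowerSeries.X_dvd_iff.2 hF) j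
  exact PowerSeries.X_pow_dvd_iff.1 this a h

lemma coeff_pow_mul_pow_eq_zero {F G : PowerSeries ℝ}
    (hF : PowerSeries.constantCoeff (R := ℝ) F = 0) (hG : PowerSeries.constantCoeff (R := ℝ) G = 0)
    {n j k : ℕ} (h : n < j + k) : PowerSeries.coeff (R := ℝ) n (F ^ j * G ^ k) = 0 := by
  rw [PowerSeries.coeff_mul]
  apply Finset.sum_eq_zero
  rintro ⟨a, b⟩ hab
  rw [Finset.HasAntidiagonal.mem_antidiagonal] at hab
  rcases lt_or_ge a j with h' | h'
  · rw [coeff_pow_eq_zero' hF h', zero_mul]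
  · rw [coeff_pow_eq_zero' hG (by omega), mul_zero]

lemma Eexp_mul {F G : PowerSeries ℝ} (hF : PowerSeries.constantCoeff (R := ℝ) F = 0)
    (hG : PowerSeries.constantCoeff (R := ℝ) G = 0) :
    Eexp F * Eexp G = Eexp (F + G) := by
  ext n
  set f : ℕ → ℕ → ℝ := fun j k => ((j.factorial : ℝ))⁻¹ * ((k.factorial : ℝ))⁻¹ *
    PowerSeries.coeff (R := ℝ) n (F ^ j * G ^ k) with hf
  have hext : ∀ a ≤ n, ∀ (H : PowerSeries ℝ), PowerSeries.constantCoeff (R := ℝ) H = 0 →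
      PowerSeries.coeff (R := ℝ) a (Eexp H)
        = ∑ j ∈ Finset.range (n + 1), ((j.factorial : ℝ))⁻¹ * PowerSeries.coeff (R := ℝ) a (H ^ j) := by
    intro a ha H hH
    rw [Eexp, PowerSeries.coeff_mk]
    apply Finset.sum_subset (Finset.range_subset_range.2 (by omega))
    intro j _ hj'
    rw [Finset.mem_range, not_lt] at hj'
    rw [coeff_pow_eq_zero' hH (by omega), mul_zero]
  have lhs : PowerSeries.coeff (R := ℝ) n (Eexp F * Eexp G)
      = ∑ j ∈ Finset.range (n + 1), ∑ k ∈ Finset.range (n + 1), f j k := by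
    rw [PowerSeries.coeff_mul]
    have step1 : ∑ x ∈ Finset.HasAntidiagonal.antidiagonal n,
        PowerSeries.coeff (R := ℝ) x.1 (Eexp F) * PowerSeries.coeff (R := ℝ) x.2 (Eexp G)
        = ∑ x ∈ Finset.HasAntidiagonal.antidiagonal n, ∑ j ∈ Finset.range (n + 1), ∑ k ∈ Finset.range (n + 1),
            (((j.factorial : ℝ))⁻¹ * PowerSeries.coeff (R := ℝ) x.1 (F ^ j)) *
              (((k.factorial : ℝ))⁻¹ * PowerSeries.coeff (R := ℝ) x.2 (G ^ k)) := by
      refine Finset.sum_congr rfl fun x hx => ?_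
      rw [Finset.HasAntidiagonal.mem_antidiagonal] at hx
      rw [hext x.1 (by omega) F hF, hext x.2 (by omega) G hG, Finset.sum_mul_sum]
    rw [step1, Finset.sum_comm]
    refine Finset.sum_congr rfl fun j _ => ?_
    rw [Finset.sum_comm]
    refine Finset.sum_congr rfl fun k _ => ?_
    rw [hf]
    simp only [PowerSeries.coeff_mul, Finset.mul_sum]
    exact Finset.sum_congr rfl fun x _ => by ring
  have rhs : PowerSeries.coeff (R := ℝ) n (Eexp (F + G))
      = ∑ m ∈ Finset.range (n + 1), ∑ j ∈ Finset.range (m + 1), f j (m - j) := by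
    rw [Eexp, PowerSeries.coeff_mk]
    refine Finset.sum_congr rfl fun m _ => ?_
    rw [add_pow, map_sum, Finset.mul_sum]
    refine Finset.sum_congr rfl fun j hj => ?_
    rw [Finset.mem_range] at hj
    have hbin : ((m.factorial : ℝ))⁻¹ * (m.choose j : ℝ)
        = ((j.factorial : ℝ))⁻¹ * (((m - j).factorial : ℝ))⁻¹ := by
      have h := Nat.choose_mul_factorial_mul_factorial (Nat.lt_succ_iff.1 hj)
      have h2 : ((m.choose j * j.factorial * (m - j).factorial : ℕ) : ℝ)
          = (m.factorial : ℝ) := by rw [h]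
      push_cast at h2
      field_simp
      linarith [h2]
    have hc : ((m.choose j : ℕ) : PowerSeries ℝ) = PowerSeries.C (R := ℝ) ((m.choose j : ℕ) : ℝ) :=
      (map_natCast (PowerSeries.C (R := ℝ)) (m.choose j)).symm
    rw [hc, PowerSeries.coeff_mul_C, hf]
    simp only
    rw [← mul_assoc, ← hbin]
    ring
  rw [lhs, rhs]
  have shrink : ∀ j ∈ Finset.range (n + 1),
      ∑ k ∈ Finset.range (n + 1), f j k = ∑ k ∈ Finset.range (n + 1 - j), f j k := by
    intro j hj
    rw [Finset.mem_range] at hj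
    refine (Finset.sum_subset (Finset.range_subset_range.2 (by omega)) fun k _ hk => ?_).symm
    rw [Finset.mem_range, not_lt] at hk
    rw [hf]
    simp only
    rw [coeff_pow_mul_pow_eq_zero hF hG (by omega), mul_zero]
  rw [Finset.sum_congr rfl shrink, Finset.sum_sigma', Finset.sum_sigma']
  refine Finset.sum_nbij' (fun x => ⟨x.1 + x.2, x.1⟩) (fun x => ⟨x.2, x.1 - x.2⟩)
    ?_ ?_ ?_ ?_ ?_
  · rintro ⟨j, k⟩ hx
    simp only [Finset.mem_sigma, Finset.mem_range] at hx ⊢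
    omega
  · rintro ⟨m, j⟩ hx
    simp only [Finset.mem_sigma, Finset.mem_range] at hx ⊢
    omega
  · rintro ⟨j, k⟩ hx
    simp
  · rintro ⟨m, j⟩ hx
    simp only [Finset.mem_sigma, Finset.mem_range] at hx
    have hm : j + (m - j) = m := by omega
    simp [hm]
  · rintro ⟨j, k⟩ hx
    simp only [Finset.mem_sigma, Finset.mem_range] at hx
    simp only
    congr 1
    omega

lemma Eexp_zero : Eexp (0 : PowerSeries ℝ) = 1 := by
  ext n
  rw [Eexp, PowerSeries.coeff_mk]
  rw [Finset.sum_eq_single 0]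
  · simp
  · intro j _ hj
    rw [zero_pow hj, map_zero, mul_zero]
  · intro h
    simp at h

lemma Eexp_pow {F : PowerSeries ℝ} (hF : PowerSeries.constantCoeff (R := ℝ) F = 0) (r : ℕ) :
    Eexp F ^ r = Eexp (r • F) := by
  induction r with
  | zero => simpa using Eexp_zero.symm
  | succ r ih =>
    have hrF : PowerSeries.constantCoeff (R := ℝ) (r • F) = 0 := by
      rw [map_nsmul, hF, smul_zero]
    rw [pow_succ, ih, Eexp_mul hrF hF, succ_nsmul]

/-- The normalized modified Bessel function `Ĩ_ν`, as a formal power series in the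
variable `x = (z/2)²`:  `Ĩ_ν(z) = Σ_k ν!/(k!(k+ν)!) x^k`. -/
noncomputable def besselItilde (ν : ℕ) : PowerSeries ℝ :=
  PowerSeries.mk fun k => (ν.factorial : ℝ) / (k.factorial * (k + ν).factorial)

/-- `B_n^{(ν)}(r) = 2^{2n} (n+ν)!/ν! · 𝔅_n(a_1(r),…,a_n(r))` where
`a_n(r) = (−1)^{n−1}(n−1)! ζ_ν(2n) r`, the `ζ_ν(2p)` being the coefficients of
`log Ĩ_ν(z) = Σ_p ((−1)^{p+1}/p) ζ_ν(2p) z^{2p}` (so that in the variable `x = (z/2)²`,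
`Ĩ_ν = exp(Σ_p ((−1)^{p+1}/p) ζ_ν(2p) 4^p x^p)`, the exponential of a series with zero
constant term being given coefficientwise by `coeff n (exp F) = Σ_j coeff n (F^j)/j!`),
`𝔅` the complete Bell polynomials, and `B_n^{(ν)}(r)` the coefficients in
`Ĩ_ν(z)^r = Σ_k ν!/(k!(k+ν)!) B_k^{(ν)}(r) (z/2)^{2k}`. -/
theorem B_eq_bell (ν : ℕ) (zeta2 : ℕ → ℝ)
    (hlog : ∀ n, PowerSeries.coeff (R := ℝ) n (besselItilde ν) =
      ∑ j ∈ Finset.range (n + 1),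
        ((j.factorial : ℝ))⁻¹ * PowerSeries.coeff (R := ℝ) n
          ((PowerSeries.mk fun p =>
            if p = 0 then (0 : ℝ) else (-1) ^ (p + 1) / p * zeta2 p * 4 ^ p) ^ j))
    (B : ℕ → ℕ → ℝ)
    (hB : ∀ r n, PowerSeries.coeff (R := ℝ) n ((besselItilde ν) ^ r) =
      (ν.factorial : ℝ) / (n.factorial * (n + ν).factorial) * B n r)
    (Bell : ℕ → ℕ → ℝ)
    (hBell : ∀ r n, ((n.factorial : ℝ))⁻¹ * Bell r n =
      ∑ j ∈ Finset.range (n + 1),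
        ((j.factorial : ℝ))⁻¹ * PowerSeries.coeff (R := ℝ) n
          ((PowerSeries.mk fun p =>
            if p = 0 then (0 : ℝ)
            else ((p.factorial : ℝ))⁻¹ *
              ((-1) ^ (p - 1) * ((p - 1).factorial : ℝ) * zeta2 p * r)) ^ j)) :
    ∀ n r : ℕ, B n r = 2 ^ (2 * n) * ((n + ν).factorial / ν.factorial : ℝ) * Bell r n := by
  intro n r
  set F4 : PowerSeries ℝ := PowerSeries.mk fun p =>
    if p = 0 then (0 : ℝ) else (-1) ^ (p + 1) / p * zeta2 p * 4 ^ p with hF4def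
  set G : PowerSeries ℝ := PowerSeries.mk fun p =>
    if p = 0 then (0 : ℝ)
    else ((p.factorial : ℝ))⁻¹ * ((-1) ^ (p - 1) * ((p - 1).factorial : ℝ) * zeta2 p * r)
    with hGdef
  have hF4 : PowerSeries.constantCoeff (R := ℝ) F4 = 0 := by
    rw [← PowerSeries.coeff_zero_eq_constantCoeff_apply, hF4def, PowerSeries.coeff_mk]
    simp
  have hI : besselItilde ν = Eexp F4 := by
    ext m
    rw [hlog m, Eexp, PowerSeries.coeff_mk]
  have hres : PowerSeries.rescale (4 : ℝ) G = r • F4 := by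
    ext p
    rw [PowerSeries.coeff_rescale, map_nsmul, hF4def, hGdef, PowerSeries.coeff_mk,
      PowerSeries.coeff_mk]
    rcases Nat.eq_zero_or_pos p with hp | hp
    · subst hp; simp
    · obtain ⟨q, rfl⟩ := Nat.exists_eq_add_of_le hp
      have hne : (1 + q : ℕ) ≠ 0 := by omega
      rw [if_neg hne, if_neg hne]
      have h1q : (1 + q) - 1 = q := by omega
      rw [h1q]
      have hsign : ((-1 : ℝ)) ^ (1 + q + 1) = (-1 : ℝ) ^ q := by
        rw [show 1 + q + 1 = q + 2 by omega, pow_add]; norm_num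
      have hfac : (((1 + q).factorial : ℕ) : ℝ) = ((1 + q : ℕ) : ℝ) * (q.factorial : ℝ) := by
        rw [show 1 + q = q + 1 by omega, Nat.factorial_succ]; push_cast; ring
      rw [hsign, hfac, nsmul_eq_mul]
      have hq0 : ((1 + q : ℕ) : ℝ) ≠ 0 := by positivity
      have hqf : (q.factorial : ℝ) ≠ 0 := Nat.cast_ne_zero.2 q.factorial_ne_zero
      field_simp
  have key : PowerSeries.coeff (R := ℝ) n ((besselItilde ν) ^ r)
      = 4 ^ n * (((n.factorial : ℝ))⁻¹ * Bell r n) := by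
    rw [hI, Eexp_pow hF4 r, Eexp, PowerSeries.coeff_mk, ← hres, hBell r n, Finset.mul_sum]
    refine Finset.sum_congr rfl fun j _ => ?_
    rw [← map_pow, PowerSeries.coeff_rescale]
    ring
  rw [hB r n] at key
  have h4 : (2 : ℝ) ^ (2 * n) = 4 ^ n := by rw [pow_mul]; norm_num
  have hnf : ((n.factorial : ℕ) : ℝ) ≠ 0 := Nat.cast_ne_zero.2 n.factorial_ne_zero
  have hnνf : (((n + ν).factorial : ℕ) : ℝ) ≠ 0 := Nat.cast_ne_zero.2 (n + ν).factorial_ne_zero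
  have hνf : ((ν.factorial : ℕ) : ℝ) ≠ 0 := Nat.cast_ne_zero.2 ν.factorial_ne_zero
  rw [h4]
  have key2 : B n r = ((n.factorial : ℝ) * ((n + ν).factorial : ℝ) / (ν.factorial : ℝ)) *
      ((ν.factorial : ℝ) / ((n.factorial : ℝ) * ((n + ν).factorial : ℝ)) * B n r) := by
    field_simp
  rw [key2, key]
  field_simp
end

section
/- The polynomials B_n^{(ν)}(r) satisfy B_n^{(ν)}(r+1) = ((r+1)/n) Σ_{k=1}^{n} k C(n,k) (ν+1)_n/((ν+1)_k (ν+1)_{n−k}) B_{n−k}^{(ν)}(r) for all n ≥ 1. -/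
open Finset

/-- The coefficients `B_n^{(ν)}(r)` in `Ĩ_ν(z)^r = Σ_k ν!/(k!(k+ν)!) B_k^{(ν)}(r)(z/2)^{2k}`
satisfy `B_n(r+1) = ((r+1)/n) Σ_{k=1}^n k C(n,k) (ν+1)_n/((ν+1)_k (ν+1)_{n−k}) B_{n−k}(r)`. -/
theorem B_recurrence_one (ν : ℕ) (B : ℕ → ℕ → ℝ)
    (hB : ∀ r n, PowerSeries.coeff n ((besselItilde ν) ^ r) =
      (ν.factorial : ℝ) / (n.factorial * (n + ν).factorial) * B n r)
    (r n : ℕ) (hn : 1 ≤ n) :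
    B n (r + 1) =
      (((r : ℝ) + 1) / n) *
        ∑ k ∈ Finset.Icc 1 n,
          (k : ℝ) * (n.choose k : ℝ) *
            (Polynomial.eval ((ν : ℝ) + 1) (ascPochhammer ℝ n) /
              (Polynomial.eval ((ν : ℝ) + 1) (ascPochhammer ℝ k) *
                Polynomial.eval ((ν : ℝ) + 1) (ascPochhammer ℝ (n - k)))) *
            B (n - k) r := by
  classical
  have hc0 : (ν.factorial : ℝ) ≠ 0 := Nat.cast_ne_zero.mpr ν.factorial_ne_zero
  have hF : ∀ m : ℕ, (m.factorial : ℝ) ≠ 0 := fun m => Nat.cast_ne_zero.mpr m.factorial_ne_zero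
  have hcoeff : ∀ j : ℕ, PowerSeries.coeff j (besselItilde ν) =
      (ν.factorial : ℝ) / (j.factorial * (j + ν).factorial) := fun j => by
    simp [besselItilde]
  -- value of the Pochhammer symbols
  have hPval : ∀ m : ℕ, Polynomial.eval ((ν : ℝ) + 1) (ascPochhammer ℝ m) =
      ((m + ν).factorial : ℝ) / (ν.factorial : ℝ) := by
    intro m
    rw [eq_div_iff hc0, mul_comm, Nat.add_comm m ν]
    exact_mod_cast factorial_mul_ascPochhammer ℝ ν m
  -- the Leibniz rule for the derivative of a power
  have hD : (PowerSeries.derivative ℝ) ((besselItilde ν) ^ (r + 1)) =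
      (r + 1) • ((besselItilde ν) ^ r • (PowerSeries.derivative ℝ) (besselItilde ν)) := by
    simpa using Derivation.leibniz_pow (PowerSeries.derivative ℝ) (a := besselItilde ν) (r + 1)
  obtain ⟨m, rfl⟩ : ∃ m, n = m + 1 := ⟨n - 1, by omega⟩
  have key0 := congrArg (PowerSeries.coeff m) hD
  rw [PowerSeries.coeff_derivative, map_nsmul, smul_eq_mul, PowerSeries.coeff_mul,
    Finset.Nat.sum_antidiagonal_eq_sum_range_succ_mk] at key0
  simp only [PowerSeries.coeff_derivative, hcoeff, hB, nsmul_eq_mul] at key0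
  -- reindex the sum over `range (m+1)` as a sum over `Icc 1 (m+1)`
  have hreindex : ∀ g : ℕ → ℝ,
      ∑ i ∈ Finset.range (m + 1), g (m + 1 - i) = ∑ k ∈ Finset.Icc 1 (m + 1), g k := by
    intro g
    apply Finset.sum_nbij' (fun i => m + 1 - i) (fun k => m + 1 - k)
    · intro a ha; simp at ha ⊢; omega
    · intro a ha; simp at ha ⊢; omega
    · intro a ha; simp at ha ⊢; omega
    · intro a ha; simp at ha ⊢; omega
    · intro a ha; rfl
  have key : (ν.factorial : ℝ) / ((m + 1).factorial * ((m + 1) + ν).factorial)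
        * B (m + 1) (r + 1) * ((m : ℝ) + 1) =
      ((r : ℝ) + 1) * ∑ k ∈ Finset.Icc 1 (m + 1),
        ((ν.factorial : ℝ) / (((m + 1) - k).factorial * (((m + 1) - k) + ν).factorial)
            * B ((m + 1) - k) r)
          * ((ν.factorial : ℝ) / (k.factorial * (k + ν).factorial)) * (k : ℝ) := by
    rw [← hreindex, key0]
    push_cast
    congr 1
    apply Finset.sum_congr rfl
    intro i hi
    simp only [Finset.mem_range] at hi
    have h1 : m + 1 - (m + 1 - i) = i := by omega
    have h2 : m + 1 - i = m - i + 1 := by omega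
    rw [h1, h2]
    push_cast
    ring
  -- nonvanishing
  have hn0 : ((m : ℝ) + 1) ≠ 0 := by positivity
  -- rewrite the target sum
  have hsum : (∑ k ∈ Finset.Icc 1 (m + 1),
        (k : ℝ) * ((m + 1).choose k : ℝ) *
          (Polynomial.eval ((ν : ℝ) + 1) (ascPochhammer ℝ (m + 1)) /
            (Polynomial.eval ((ν : ℝ) + 1) (ascPochhammer ℝ k) *
              Polynomial.eval ((ν : ℝ) + 1) (ascPochhammer ℝ ((m + 1) - k)))) *
          B ((m + 1) - k) r) =
      (((m + 1).factorial : ℝ) * (((m + 1) + ν).factorial : ℝ) / (ν.factorial : ℝ)) *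
        ∑ k ∈ Finset.Icc 1 (m + 1),
          ((ν.factorial : ℝ) / (((m + 1) - k).factorial * (((m + 1) - k) + ν).factorial)
              * B ((m + 1) - k) r)
            * ((ν.factorial : ℝ) / (k.factorial * (k + ν).factorial)) * (k : ℝ) := by
    rw [Finset.mul_sum]
    apply Finset.sum_congr rfl
    intro k hk
    simp only [Finset.mem_Icc] at hk
    have hch : ((k.factorial : ℝ)) * (((m + 1) - k).factorial : ℝ) * ((m + 1).choose k : ℝ)
        = ((m + 1).factorial : ℝ) := by
      have := Nat.choose_mul_factorial_mul_factorial (show k ≤ m + 1 by omega)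
      push_cast [← this]
      ring
    rw [hPval, hPval, hPval, ← hch]
    field_simp
  rw [hsum]
  calc B (m + 1) (r + 1)
      = ((m + 1).factorial : ℝ) * (((m + 1) + ν).factorial : ℝ)
          / ((ν.factorial : ℝ) * ((m : ℝ) + 1)) *
          ((ν.factorial : ℝ) / ((m + 1).factorial * ((m + 1) + ν).factorial)
            * B (m + 1) (r + 1) * ((m : ℝ) + 1)) := by
        field_simp
    _ = ((m + 1).factorial : ℝ) * (((m + 1) + ν).factorial : ℝ)
          / ((ν.factorial : ℝ) * ((m : ℝ) + 1)) *
          (((r : ℝ) + 1) * ∑ k ∈ Finset.Icc 1 (m + 1),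
            ((ν.factorial : ℝ) / (((m + 1) - k).factorial * (((m + 1) - k) + ν).factorial)
                * B ((m + 1) - k) r)
              * ((ν.factorial : ℝ) / (k.factorial * (k + ν).factorial)) * (k : ℝ)) := by
        rw [key]
    _ = _ := by
        simp only [Nat.add_comm _ ν]
        field_simp
        push_cast
        ring
end

section
/- The polynomials B_n^{(ν)}(r) satisfy B_n^{(ν)}(r) = Σ_{k=1}^{n} (k(r+1)/n − 1) C(n,k) (ν+1)_n/((ν+1)_k (ν+1)_{n−k}) B_{n−k}^{(ν)}(r) for all n ≥ 1. -/
open Finset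

/-- The coefficients `B_n^{(ν)}(r)` in `Ĩ_ν(z)^r = Σ_k ν!/(k!(k+ν)!) B_k^{(ν)}(r)(z/2)^{2k}`
satisfy `B_n(r) = Σ_{k=1}^n (k(r+1)/n − 1) C(n,k) (ν+1)_n/((ν+1)_k (ν+1)_{n−k}) B_{n−k}(r)`. -/
theorem B_recurrence_two (ν : ℕ) (B : ℕ → ℕ → ℝ)
    (hB : ∀ r n, PowerSeries.coeff (R := ℝ) n ((besselItilde ν) ^ r) =
      (ν.factorial : ℝ) / (n.factorial * (n + ν).factorial) * B n r)
    (r n : ℕ) (hn : 1 ≤ n) :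
    B n r =
      ∑ k ∈ Finset.Icc 1 n,
        ((k : ℝ) * ((r : ℝ) + 1) / n - 1) * (n.choose k : ℝ) *
          (Polynomial.eval ((ν : ℝ) + 1) (ascPochhammer ℝ n) /
            (Polynomial.eval ((ν : ℝ) + 1) (ascPochhammer ℝ k) *
              Polynomial.eval ((ν : ℝ) + 1) (ascPochhammer ℝ (n - k)))) *
          B (n - k) r := by
  obtain ⟨m, rfl⟩ : ∃ m, n = m + 1 := ⟨n - 1, (Nat.succ_pred_eq_of_pos hn).symm⟩
  set f := besselItilde ν with hfdef
  set a : ℕ → ℝ := fun j => (ν.factorial : ℝ) / (j.factorial * (j + ν).factorial) with ha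
  set P : ℕ → ℝ := fun j => Polynomial.eval ((ν : ℝ) + 1) (ascPochhammer ℝ j) with hPdef
  have hνne : (ν.factorial : ℝ) ≠ 0 := Nat.cast_ne_zero.mpr ν.factorial_ne_zero
  have hPfac : ∀ j, (ν.factorial : ℝ) * P j = ((ν + j).factorial : ℝ) := fun j =>
    factorial_mul_ascPochhammer ℝ ν j
  have hPne : ∀ j, P j ≠ 0 := by
    intro j h
    have := hPfac j
    rw [h, mul_zero] at this
    exact (Nat.cast_ne_zero.mpr (ν + j).factorial_ne_zero) this.symm
  have haP : ∀ j, a j = 1 / (j.factorial * P j) := by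
    intro j
    show (ν.factorial : ℝ) / (j.factorial * (j + ν).factorial) = 1 / (j.factorial * P j)
    have h1 : ((j + ν).factorial : ℝ) = (ν.factorial : ℝ) * P j := by
      rw [Nat.add_comm]; exact (hPfac j).symm
    rw [h1]
    rw [mul_left_comm, div_mul_eq_div_div, div_self hνne]
  have ha0 : a 0 = 1 := by
    show (ν.factorial : ℝ) / (Nat.factorial 0 * (0 + ν).factorial) = 1
    rw [Nat.factorial_zero, Nat.zero_add, Nat.cast_one, one_mul, div_self hνne]
  have hcoef : ∀ k, PowerSeries.coeff (R := ℝ) k f = a k := by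
    intro k; simp [hfdef, besselItilde, ha]
  set c : ℕ → ℝ := fun j => a j * B j r with hc
  have hB' : ∀ j, PowerSeries.coeff (R := ℝ) j (f ^ r) = c j := fun j => hB r j
  -- the derivative identity
  have hder : f * (PowerSeries.derivative ℝ (f ^ r)) = r • ((PowerSeries.derivative ℝ f) * f ^ r) := by
    rw [Derivation.leibniz_pow]
    cases r with
    | zero => simp
    | succ s =>
      simp only [smul_eq_mul, nsmul_eq_mul, Nat.add_sub_cancel]
      ring
  have E := congrArg (PowerSeries.coeff (R := ℝ) m) hder
  rw [map_nsmul, PowerSeries.coeff_mul, PowerSeries.coeff_mul,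
    Finset.Nat.sum_antidiagonal_eq_sum_range_succ_mk,
    Finset.Nat.sum_antidiagonal_eq_sum_range_succ_mk] at E
  simp only [PowerSeries.coeff_derivative, smul_eq_mul, nsmul_eq_mul, hcoef, hB'] at E
  -- E : ∑ x ∈ range (m+1), a x * (c (m-x+1) * (↑(m-x)+1))
  --   = ↑r * ∑ x ∈ range (m+1), a (x+1) * (↑x+1) * c (m-x)
  have hS1 : (∑ k ∈ Finset.Icc 1 (m+1), (k : ℝ) * a k * c (m+1-k)) =
      ∑ x ∈ range (m+1), a (x+1) * ((x:ℝ)+1) * c (m-x) := by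
    rw [← Finset.Ico_add_one_right_eq_Icc, Finset.sum_Ico_eq_sum_range]
    have hr : m + 1 + 1 - 1 = m + 1 := by omega
    rw [hr]
    apply Finset.sum_congr rfl
    intro i hi
    simp only [show (1:ℕ) + i = i + 1 from by omega, show m + 1 - (i + 1) = m - i from by omega]
    push_cast
    ring
  have hS2 : (∑ x ∈ range (m+1), a x * (c (m-x+1) * (((m-x : ℕ) : ℝ) + 1))) =
      (∑ k ∈ Finset.Icc 1 (m+1), ((m+1-k : ℕ) : ℝ) * a k * c (m+1-k))
        + ((m:ℝ)+1) * c (m+1) := by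
    rw [Finset.sum_range_succ', ← Finset.Ico_add_one_right_eq_Icc, Finset.sum_Ico_eq_sum_range]
    have hr : m + 1 + 1 - 1 = m + 1 := by omega
    rw [hr]
    have hlast : ∑ i ∈ range (m + 1), ((m+1-(1+i) : ℕ) : ℝ) * a (1+i) * c (m+1-(1+i))
        = ∑ i ∈ range m, ((m+1-(1+i) : ℕ) : ℝ) * a (1+i) * c (m+1-(1+i)) := by
      rw [Finset.sum_range_succ]
      have : m + 1 - (1 + m) = 0 := by omega
      simp [this]
    rw [hlast]
    have h0 : a 0 * (c (m - 0 + 1) * (((m - 0 : ℕ) : ℝ) + 1)) = ((m:ℝ)+1) * c (m+1) := by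
      rw [ha0, Nat.sub_zero]
      ring
    rw [h0]
    congr 1
    apply Finset.sum_congr rfl
    intro i hi
    have hi' : i < m := Finset.mem_range.mp hi
    have h1 : m - (i+1) + 1 = m - i := by omega
    have h2 : m + 1 - (1 + i) = m - i := by omega
    have h3 : ((m - (i+1) : ℕ) : ℝ) + 1 = ((m - i : ℕ) : ℝ) := by
      have h : m - (i+1) + 1 = m - i := by omega
      rw [← h]
      push_cast
      ring
    rw [h1, h2, h3]
    have h4 : 1 + i = i + 1 := by omega
    rw [h4]
    ring
  have key : ((m:ℝ)+1) * c (m+1) =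
      (↑r * ∑ k ∈ Finset.Icc 1 (m+1), (k : ℝ) * a k * c (m+1-k))
      - ∑ k ∈ Finset.Icc 1 (m+1), ((m+1-k : ℕ) : ℝ) * a k * c (m+1-k) := by
    rw [hS1, ← E, hS2]
    ring
  have hane : ∀ j, a j ≠ 0 := by
    intro j
    rw [haP]
    exact one_div_ne_zero (mul_ne_zero (Nat.cast_ne_zero.mpr j.factorial_ne_zero) (hPne j))
  have hm1 : ((m:ℝ) + 1) ≠ 0 := by positivity
  have hterm : ∀ k ∈ Finset.Icc 1 (m+1),
      ((k : ℝ) * ((r : ℝ) + 1) / ((m+1 : ℕ) : ℝ) - 1) * (((m+1).choose k : ℕ) : ℝ) *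
        (P (m+1) / (P k * P (m+1-k))) * B (m+1-k) r
      = ((r:ℝ) * ((k : ℝ) * a k * c (m+1-k)) - ((m+1-k : ℕ) : ℝ) * (a k * c (m+1-k)))
          / (((m:ℝ)+1) * a (m+1)) := by
    intro k hk
    obtain ⟨hk1, hk2⟩ := Finset.mem_Icc.mp hk
    have hch : (((m+1).choose k : ℕ) : ℝ) * (k.factorial : ℝ) * ((m+1-k).factorial : ℝ)
        = (((m+1).factorial : ℕ) : ℝ) := by
      exact_mod_cast congrArg (Nat.cast (R := ℝ)) (Nat.choose_mul_factorial_mul_factorial hk2)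
    have hsub : ((m+1-k : ℕ) : ℝ) = ((m:ℝ)+1) - (k:ℝ) := by
      push_cast [Nat.cast_sub hk2]
      ring
    simp only [hc, haP, hsub]
    have hFk : ((k.factorial : ℕ) : ℝ) ≠ 0 := Nat.cast_ne_zero.mpr k.factorial_ne_zero
    have hFnk : (((m+1-k).factorial : ℕ) : ℝ) ≠ 0 := Nat.cast_ne_zero.mpr (m+1-k).factorial_ne_zero
    have hFn : (((m+1).factorial : ℕ) : ℝ) ≠ 0 := Nat.cast_ne_zero.mpr (m+1).factorial_ne_zero
    have hPk := hPne k
    have hPnk := hPne (m+1-k)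
    have hPn := hPne (m+1)
    have hm1' : (((m+1:ℕ)) : ℝ) ≠ 0 := by exact_mod_cast hm1
    rw [← hch]
    field_simp
    push_cast
    ring
  calc B (m+1) r
      = (((m:ℝ)+1) * c (m+1)) / (((m:ℝ)+1) * a (m+1)) := by
        rw [hc]
        field_simp
        rw [mul_div_cancel_right₀ _ (hane (m + 1))]
    _ = ((↑r * ∑ k ∈ Finset.Icc 1 (m+1), (k : ℝ) * a k * c (m+1-k))
          - ∑ k ∈ Finset.Icc 1 (m+1), ((m+1-k : ℕ) : ℝ) * a k * c (m+1-k))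
          / (((m:ℝ)+1) * a (m+1)) := by rw [key]
    _ = ∑ k ∈ Finset.Icc 1 (m+1),
          ((r:ℝ) * ((k : ℝ) * a k * c (m+1-k)) - ((m+1-k : ℕ) : ℝ) * (a k * c (m+1-k)))
          / (((m:ℝ)+1) * a (m+1)) := by
        rw [← Finset.sum_div, Finset.mul_sum, ← Finset.sum_sub_distrib]
        congr 1
        apply Finset.sum_congr rfl
        intro k hk
        ring
    _ = ∑ k ∈ Finset.Icc 1 (m+1),
        ((k : ℝ) * ((r : ℝ) + 1) / ((m+1 : ℕ) : ℝ) - 1) * (((m+1).choose k : ℕ) : ℝ) *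
          (P (m+1) / (P k * P (m+1-k))) * B (m+1-k) r := by
        exact (Finset.sum_congr rfl hterm).symm
end

section
/- The polynomials B_n^{(ν)} satisfy the Bell-polynomial recurrence B_n^{(ν)}(r) = r·(ν+n)! Σ_{k=0}^{n−1} C(n−1,k) (−1)^k k!/(ν+n−k−1)! · 2^{2k+2} ζ_ν(2k+2) B_{n−1−k}^{(ν)}(r) for n ≥ 1, with B_0^{(ν)}(r) = 1. -/
open Finset

private lemma coeff_pow_zero_of_lt {F : PowerSeries ℝ}
    (h : PowerSeries.constantCoeff (R := ℝ) F = 0) {b j : ℕ} (hbj : b < j) :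
    PowerSeries.coeff (R := ℝ) b (F ^ j) = 0 := by
  obtain ⟨g, rfl⟩ := PowerSeries.X_dvd_iff.mpr h
  rw [mul_pow, PowerSeries.coeff_X_pow_mul', if_neg (by omega)]

/-- If `G = exp F` coefficientwise, then `G' = F' * G`. -/
private lemma exp_deriv {F G : PowerSeries ℝ} (h0 : PowerSeries.constantCoeff (R := ℝ) F = 0)
    (hG : ∀ n, PowerSeries.coeff (R := ℝ) n G =
      ∑ j ∈ Finset.range (n + 1), ((j.factorial : ℝ))⁻¹ * PowerSeries.coeff (R := ℝ) n (F ^ j)) :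
    PowerSeries.derivative ℝ G = PowerSeries.derivative ℝ F * G := by
  ext m
  rw [PowerSeries.coeff_derivative, hG (m + 1), Finset.sum_mul]
  have hL : ∀ j : ℕ,
      ((j.factorial : ℝ))⁻¹ * PowerSeries.coeff (R := ℝ) (m + 1) (F ^ j) * (m + 1)
        = ((j.factorial : ℝ))⁻¹ * ((j : ℝ) * PowerSeries.coeff (R := ℝ) m
            (PowerSeries.derivative ℝ F * F ^ (j - 1))) := by
    intro j
    have h1 : PowerSeries.coeff (R := ℝ) (m + 1) (F ^ j) * (m + 1)
        = PowerSeries.coeff (R := ℝ) m (PowerSeries.derivative ℝ (F ^ j)) :=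
      (PowerSeries.coeff_derivative _ m).symm
    rw [mul_assoc, h1, Derivation.leibniz_pow (D := PowerSeries.derivative ℝ) (a := F) j,
      smul_eq_mul (α := PowerSeries ℝ), map_nsmul, nsmul_eq_mul,
      mul_comm (F ^ (j - 1)) (PowerSeries.derivative ℝ F)]
  simp_rw [hL]
  rw [Finset.sum_range_succ']
  simp only [Nat.cast_zero, zero_mul, mul_zero, add_zero]
  have hL2 : ∀ i : ℕ,
      (((i + 1).factorial : ℝ))⁻¹ * (((i : ℝ) + 1) * PowerSeries.coeff (R := ℝ) m
          (PowerSeries.derivative ℝ F * F ^ (i + 1 - 1)))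
        = ((i.factorial : ℝ))⁻¹ * PowerSeries.coeff (R := ℝ) m
            (PowerSeries.derivative ℝ F * F ^ i) := by
    intro i
    have h1 : (i.factorial : ℝ) ≠ 0 := Nat.cast_ne_zero.mpr i.factorial_ne_zero
    have h2 : ((i : ℝ) + 1) ≠ 0 := by positivity
    rw [Nat.add_sub_cancel, Nat.factorial_succ, ← mul_assoc]
    congr 1
    push_cast
    field_simp
  have hL2' : ∀ i ∈ Finset.range (m + 1),
      (((i + 1).factorial : ℝ))⁻¹ * ((((i : ℕ) + 1 : ℕ) : ℝ) * PowerSeries.coeff (R := ℝ) m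
          (PowerSeries.derivative ℝ F * F ^ (i + 1 - 1)))
        = ((i.factorial : ℝ))⁻¹ * PowerSeries.coeff (R := ℝ) m
            (PowerSeries.derivative ℝ F * F ^ i) := by
    intro i _
    have := hL2 i
    push_cast at this ⊢
    exact this
  rw [Finset.sum_congr rfl hL2']
  -- right side
  rw [PowerSeries.coeff_mul]
  have hR : ∀ p ∈ Finset.HasAntidiagonal.antidiagonal m,
      PowerSeries.coeff (R := ℝ) p.1 (PowerSeries.derivative ℝ F) * PowerSeries.coeff (R := ℝ) p.2 G
        = ∑ j ∈ Finset.range (m + 1),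
            ((j.factorial : ℝ))⁻¹ * (PowerSeries.coeff (R := ℝ) p.1 (PowerSeries.derivative ℝ F)
              * PowerSeries.coeff (R := ℝ) p.2 (F ^ j)) := by
    intro p hp
    have hp2 : p.2 ≤ m := by
      have := Finset.HasAntidiagonal.mem_antidiagonal.mp hp; omega
    rw [hG p.2, Finset.mul_sum]
    rw [Finset.sum_subset (s₁ := Finset.range (p.2 + 1)) (s₂ := Finset.range (m + 1))
      (Finset.range_subset_range.mpr (by omega))]
    · apply Finset.sum_congr rfl; intro j _; ring
    · intro j _ hj
      have hlt : p.2 < j := by simp only [Finset.mem_range] at hj; omega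
      rw [coeff_pow_zero_of_lt h0 hlt]
      ring
  rw [Finset.sum_congr rfl hR, Finset.sum_comm]
  apply Finset.sum_congr rfl
  intro j _
  rw [PowerSeries.coeff_mul, Finset.mul_sum]

set_option maxHeartbeats 1000000 in
/-- Bell-polynomial recurrence for the `B_n^{(ν)}(r)`:
`B_n(r) = r (ν+n)! Σ_{k=0}^{n−1} C(n−1,k) (−1)^k k!/(ν+n−k−1)! 2^{2k+2} ζ_ν(2k+2) B_{n−1−k}(r)`,
where `zeta2 p` stands for `ζ_ν(2p)`, defined via
`log Ĩ_ν(z) = Σ_p ((−1)^{p+1}/p) ζ_ν(2p) z^{2p}` (i.e., in the variable `x = (z/2)²`,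
`Ĩ_ν = exp(Σ_p ((−1)^{p+1}/p) ζ_ν(2p) 4^p x^p)`, the exponential of a series with zero
constant term being given coefficientwise by `coeff n (exp F) = Σ_j coeff n (F^j)/j!`),
and `B_n^{(ν)}(r)` are the coefficients in
`Ĩ_ν(z)^r = Σ_k ν!/(k!(k+ν)!) B_k^{(ν)}(r)(z/2)^{2k}`. -/
theorem B_bell_recurrence (ν : ℕ) (zeta2 : ℕ → ℝ)
    (hlog : ∀ n, PowerSeries.coeff (R := ℝ) n (besselItilde ν) =
      ∑ j ∈ Finset.range (n + 1),
        ((j.factorial : ℝ))⁻¹ * PowerSeries.coeff (R := ℝ) n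
          ((PowerSeries.mk fun p =>
            if p = 0 then (0 : ℝ) else (-1) ^ (p + 1) / p * zeta2 p * 4 ^ p) ^ j))
    (B : ℕ → ℕ → ℝ)
    (hB : ∀ r n, PowerSeries.coeff (R := ℝ) n ((besselItilde ν) ^ r) =
      (ν.factorial : ℝ) / (n.factorial * (n + ν).factorial) * B n r) :
    ∀ (r n : ℕ), 1 ≤ n →
      B n r = (r : ℝ) * ((ν + n).factorial : ℝ) *
        ∑ k ∈ Finset.range n,
          ((n - 1).choose k : ℝ) * (-1) ^ k * (k.factorial : ℝ) /
            ((ν + n - k - 1).factorial : ℝ) * 2 ^ (2 * k + 2) * zeta2 (k + 1) *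
            B (n - 1 - k) r := by
  intro r n hn
  set F : PowerSeries ℝ := PowerSeries.mk fun p =>
      if p = 0 then (0 : ℝ) else (-1) ^ (p + 1) / p * zeta2 p * 4 ^ p with hF
  have hcoef_ne : ((ν.factorial : ℝ) / (n.factorial * (n + ν).factorial)) ≠ 0 := by
    have h1 : (ν.factorial : ℝ) ≠ 0 := Nat.cast_ne_zero.mpr ν.factorial_ne_zero
    have h2 : (n.factorial : ℝ) ≠ 0 := Nat.cast_ne_zero.mpr n.factorial_ne_zero
    have h3 : ((n + ν).factorial : ℝ) ≠ 0 := Nat.cast_ne_zero.mpr (n + ν).factorial_ne_zero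
    positivity
  rcases Nat.eq_zero_or_pos r with hr | hr
  · subst hr
    have h1 : PowerSeries.coeff (R := ℝ) n ((besselItilde ν) ^ 0) = 0 := by
      rw [pow_zero, PowerSeries.coeff_one, if_neg (by omega)]
    have := hB 0 n
    rw [h1] at this
    have hB0 : B n 0 = 0 := by
      rcases mul_eq_zero.mp this.symm with h | h
      · exact absurd h hcoef_ne
      · exact h
    simp [hB0]
  · -- main case
    have h0 : PowerSeries.constantCoeff (R := ℝ) F = 0 := by
      rw [← PowerSeries.coeff_zero_eq_constantCoeff, hF, PowerSeries.coeff_mk, if_pos rfl]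
    have hder : PowerSeries.derivative ℝ (besselItilde ν)
        = PowerSeries.derivative ℝ F * besselItilde ν := exp_deriv h0 hlog
    have hpow : PowerSeries.derivative ℝ ((besselItilde ν) ^ r)
        = (r : PowerSeries ℝ) * (PowerSeries.derivative ℝ F * (besselItilde ν) ^ r) := by
      rw [Derivation.leibniz_pow (D := PowerSeries.derivative ℝ) (a := besselItilde ν) r, hder]
      rw [smul_eq_mul (α := PowerSeries ℝ), nsmul_eq_mul]
      rw [show (besselItilde ν) ^ (r - 1) * (PowerSeries.derivative ℝ F * besselItilde ν)
          = PowerSeries.derivative ℝ F * ((besselItilde ν) ^ (r - 1) * besselItilde ν) by ring]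
      rw [← pow_succ, Nat.sub_add_cancel hr]
    -- take coeff (n-1)
    have hmain := congrArg (PowerSeries.coeff (R := ℝ) (n - 1)) hpow
    rw [PowerSeries.coeff_derivative, Nat.sub_add_cancel hn] at hmain
    rw [PowerSeries.coeff_mul] at hmain
    -- compute coeff of the cast r
    have hcast : ∀ i : ℕ, PowerSeries.coeff (R := ℝ) i ((r : PowerSeries ℝ))
        = if i = 0 then (r : ℝ) else 0 := by
      intro i
      have h : ((r : ℕ) : PowerSeries ℝ) = PowerSeries.C (R := ℝ) (r : ℝ) := by
        rw [← map_natCast (PowerSeries.C (R := ℝ)) r]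
      rw [h, PowerSeries.coeff_C]
    rw [Finset.sum_eq_single (0, n - 1)] at hmain
    rotate_left
    · rintro ⟨a, b⟩ hab hne
      rcases Nat.eq_zero_or_pos a with ha | ha
      · exfalso; apply hne
        have habm := Finset.HasAntidiagonal.mem_antidiagonal.mp hab
        subst ha; simp at habm ⊢; omega
      · rw [hcast, if_neg (by omega), zero_mul]
    · intro h; exact absurd (Finset.HasAntidiagonal.mem_antidiagonal.mpr (by simp)) h
    rw [hcast, if_pos rfl] at hmain
    simp only [Prod.fst, Prod.snd] at hmain
    rw [PowerSeries.coeff_mul, Finset.Nat.sum_antidiagonal_eq_sum_range_succ_mk] at hmain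
    simp only [Nat.succ_eq_add_one, Nat.sub_add_cancel hn] at hmain
    have hcastn : ((n - 1 : ℕ) : ℝ) + 1 = (n : ℝ) := by
      exact_mod_cast congrArg (fun x : ℕ => (x : ℝ)) (Nat.sub_add_cancel hn)
    rw [hcastn] at hmain
    rw [hB r n] at hmain
    simp_rw [hB r] at hmain
    -- coeff of derivative F
    have hdF : ∀ k : ℕ, PowerSeries.coeff (R := ℝ) k (PowerSeries.derivative ℝ F)
        = (-1) ^ k * zeta2 (k + 1) * 4 ^ (k + 1) := by
      intro k
      rw [PowerSeries.coeff_derivative, hF, PowerSeries.coeff_mk, if_neg (Nat.succ_ne_zero k)]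
      have hk1 : ((k : ℝ) + 1) ≠ 0 := by positivity
      push_cast
      rw [div_mul_eq_mul_div, div_mul_eq_mul_div, div_mul_eq_mul_div, div_eq_iff hk1,
        pow_add]
      ring
    simp_rw [hdF] at hmain
    -- solve for B n r
    apply mul_left_cancel₀
      (b := B n r)
      (a := (n : ℝ) * ((ν.factorial : ℝ) / (n.factorial * (n + ν).factorial)))
    · have hn0 : (n : ℝ) ≠ 0 := Nat.cast_ne_zero.mpr (by omega)
      exact mul_ne_zero hn0 hcoef_ne
    have hL : (n : ℝ) * ((ν.factorial : ℝ) / (n.factorial * (n + ν).factorial)) * B n r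
        = (r : ℝ) * ∑ k ∈ Finset.range n,
            (-1) ^ k * zeta2 (k + 1) * 4 ^ (k + 1) *
              ((ν.factorial : ℝ) / ((n - 1 - k).factorial * ((n - 1 - k) + ν).factorial)
                * B (n - 1 - k) r) := by
      calc (n : ℝ) * ((ν.factorial : ℝ) / (n.factorial * (n + ν).factorial)) * B n r
          = (ν.factorial : ℝ) / (n.factorial * (n + ν).factorial) * B n r * n := by ring
        _ = _ := by rw [hmain]
    rw [hL, Finset.mul_sum, Finset.mul_sum, Finset.mul_sum]
    apply Finset.sum_congr rfl
    intro k hk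
    have hkn : k < n := Finset.mem_range.mp hk
    -- per-term identity
    have e1 : ν + n - k - 1 = (n - 1 - k) + ν := by omega
    rw [e1]
    have hfacsplit : (n.factorial : ℝ) = (n : ℝ) * ((n - 1).factorial : ℝ) := by
      have h : n.factorial = n * (n - 1).factorial := by
        conv_lhs => rw [show n = (n - 1) + 1 by omega]
        rw [Nat.factorial_succ]
        congr 2
        omega
      rw [h]; push_cast; ring
    have hchoose : ((n - 1).choose k : ℝ) * (k.factorial : ℝ) * ((n - 1 - k).factorial : ℝ)
        = ((n - 1).factorial : ℝ) := by
      have h := Nat.choose_mul_factorial_mul_factorial (show k ≤ n - 1 by omega)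
      exact_mod_cast congrArg (fun x : ℕ => (x : ℝ)) h
    have hnν : ((n + ν).factorial : ℝ) = ((ν + n).factorial : ℝ) := by rw [Nat.add_comm n ν]
    have h2 : (n : ℝ) ≠ 0 := Nat.cast_ne_zero.mpr (by omega)
    have h4 : ((n - 1 - k).factorial : ℝ) ≠ 0 := Nat.cast_ne_zero.mpr (n - 1 - k).factorial_ne_zero
    have h5 : (((n - 1 - k) + ν).factorial : ℝ) ≠ 0 :=
      Nat.cast_ne_zero.mpr ((n - 1 - k) + ν).factorial_ne_zero
    have h6 : ((n - 1).factorial : ℝ) ≠ 0 := Nat.cast_ne_zero.mpr (n - 1).factorial_ne_zero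
    have h7 : (ν.factorial : ℝ) ≠ 0 := Nat.cast_ne_zero.mpr ν.factorial_ne_zero
    have h3 : ((ν + n).factorial : ℝ) ≠ 0 := Nat.cast_ne_zero.mpr (ν + n).factorial_ne_zero
    have h8 : (4 : ℝ) ^ (k + 1) = 2 ^ (2 * k + 2) := by
      rw [show (4 : ℝ) = 2 ^ 2 by norm_num, ← pow_mul]
      ring_nf
    have hC : ((n - 1).choose k : ℝ) ≠ 0 :=
      Nat.cast_ne_zero.mpr (Nat.choose_pos (show k ≤ n - 1 by omega)).ne'
    have h5' : ((ν + (n - 1 - k)).factorial : ℝ) ≠ 0 :=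
      Nat.cast_ne_zero.mpr (ν + (n - 1 - k)).factorial_ne_zero
    rw [hnν, hfacsplit, ← hchoose, h8]
    field_simp
end

section
/- As formal power series identities, the coefficients b_n(ν) defined by Σ_{n≥1} x^n b_n(ν)/((ν+n)!(n−1)!) = (x/(ν+1)!)·(√x I_ν(2√x)/((ν+1) I_{ν+1}(2√x)) − 2) satisfy b_n(ν) = (−1)^n (n+ν)!(n−1)!/((ν+1)!(ν+1)) · 2^{2n−2} ζ_{ν+1}(2n−2) for n ≥ 2; in particular b_2(ν) = 1/(ν+1). -/
open Finset

/-- In the variable `x` (with `z = 2√x`), `√x I_ν(2√x) = x^{(ν+1)/2} Σ_k x^k/(k!(k+ν)!)` and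
`I_{ν+1}(2√x) = x^{(ν+1)/2} Σ_k x^k/(k!(k+ν+1)!)`, so the quotient
`√x I_ν(2√x)/I_{ν+1}(2√x)` is the formal power series `F_ν G_ν⁻¹`, where: -/
noncomputable def besselNumer (ν : ℕ) : PowerSeries ℝ :=
  PowerSeries.mk fun k => (1 : ℝ) / (k.factorial * (k + ν).factorial)

noncomputable def besselDenom (ν : ℕ) : PowerSeries ℝ :=
  PowerSeries.mk fun k => (1 : ℝ) / (k.factorial * (k + ν + 1).factorial)

lemma coeff_pow_eq_zero_of_lt {L : PowerSeries ℝ} (hL : PowerSeries.constantCoeff L = 0) :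
    ∀ {j n : ℕ}, n < j → PowerSeries.coeff n (L ^ j) = 0 := by
  intro j
  induction j with
  | zero => intro n h; omega
  | succ j ih =>
    intro n h
    rw [pow_succ, mul_comm, PowerSeries.coeff_mul]
    apply Finset.sum_eq_zero
    rintro ⟨i, k⟩ hik
    rw [Finset.HasAntidiagonal.mem_antidiagonal] at hik
    rcases Nat.eq_zero_or_pos i with hi | hi
    · subst hi
      simp only [PowerSeries.coeff_zero_eq_constantCoeff, hL, zero_mul]
    · have : k < j := by omega
      rw [ih this, mul_zero]

lemma exp_deriv_core {L S : PowerSeries ℝ} (hL : PowerSeries.constantCoeff L = 0)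
    (H : ∀ n, PowerSeries.coeff n S =
      ∑ j ∈ Finset.range (n + 1), ((j.factorial : ℝ))⁻¹ * PowerSeries.coeff n (L ^ j)) :
    PowerSeries.derivative ℝ S = PowerSeries.derivative ℝ L * S := by
  ext n
  have lhs : PowerSeries.coeff n (PowerSeries.derivative ℝ S) =
      ∑ i ∈ Finset.range (n + 1),
        ((i.factorial : ℝ))⁻¹ * PowerSeries.coeff n (L ^ i * PowerSeries.derivative ℝ L) := by
    rw [PowerSeries.coeff_derivative, H (n + 1), Finset.sum_mul]
    rw [Finset.sum_range_succ']
    have h0 : ((Nat.factorial 0 : ℝ))⁻¹ * PowerSeries.coeff (n + 1) (L ^ 0) * (n + 1) = 0 := by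
      simp [PowerSeries.coeff_one]
    rw [h0, add_zero]
    apply Finset.sum_congr rfl
    intro i _
    have hder : PowerSeries.coeff (n + 1) (L ^ (i + 1)) * (n + 1) =
        ((i : ℝ) + 1) * PowerSeries.coeff n (L ^ i * PowerSeries.derivative ℝ L) := by
      rw [← PowerSeries.coeff_derivative, Derivation.leibniz_pow, Nat.add_sub_cancel,
        smul_eq_mul]
      rw [map_nsmul, nsmul_eq_mul]
      push_cast
      ring
    rw [mul_assoc, hder, Nat.factorial_succ]
    push_cast
    have h1 : ((i : ℝ) + 1) ≠ 0 := by positivity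
    have h2 : ((i.factorial : ℝ)) ≠ 0 := by positivity
    field_simp
  rw [lhs, PowerSeries.coeff_mul]
  have rhs : ∑ p ∈ Finset.HasAntidiagonal.antidiagonal n,
      PowerSeries.coeff p.1 (PowerSeries.derivative ℝ L) * PowerSeries.coeff p.2 S =
      ∑ p ∈ Finset.HasAntidiagonal.antidiagonal n, ∑ j ∈ Finset.range (n + 1),
        ((j.factorial : ℝ))⁻¹ *
          (PowerSeries.coeff p.1 (PowerSeries.derivative ℝ L) *
            PowerSeries.coeff p.2 (L ^ j)) := by
    apply Finset.sum_congr rfl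
    rintro ⟨i, k⟩ hik
    rw [Finset.HasAntidiagonal.mem_antidiagonal] at hik
    rw [H k, Finset.mul_sum]
    rw [← Finset.sum_subset (Finset.range_subset_range.2 (by omega : k + 1 ≤ n + 1))]
    · apply Finset.sum_congr rfl; intro j _; ring
    · intro j hj hj2
      rw [Finset.mem_range] at hj hj2
      rw [coeff_pow_eq_zero_of_lt hL (by omega)]
      ring
  rw [rhs, Finset.sum_comm]
  apply Finset.sum_congr rfl
  intro j _
  rw [← Finset.mul_sum, ← PowerSeries.coeff_mul, mul_comm (L ^ j)]

/-- The coefficients `b_n(ν)` defined by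
`Σ_{n≥1} x^n b_n(ν)/((ν+n)!(n−1)!) = (x/(ν+1)!)(√x I_ν(2√x)/((ν+1) I_{ν+1}(2√x)) − 2)`
satisfy `b_n(ν) = (−1)^n (n+ν)!(n−1)!/((ν+1)!(ν+1)) 2^{2n−2} ζ_{ν+1}(2n−2)` for `n ≥ 2`;
in particular `b_2(ν) = 1/(ν+1)`.  Here `zeta2 p` stands for `ζ_{ν+1}(2p)`, defined via
`log Ĩ_{ν+1}(z) = Σ_p ((−1)^{p+1}/p) ζ_{ν+1}(2p) z^{2p}` (i.e., in the variable `x = (z/2)²`,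
`Ĩ_{ν+1} = exp(Σ_p ((−1)^{p+1}/p) ζ_{ν+1}(2p) 4^p x^p)`, the exponential of a series with
zero constant term being given coefficientwise by `coeff n (exp F) = Σ_j coeff n (F^j)/j!`). -/
theorem b_seq_eq_bessel_zeta (ν : ℕ) (zeta2 : ℕ → ℝ)
    (hlog : ∀ n,
      PowerSeries.coeff n
          (PowerSeries.mk fun k =>
            ((ν + 1).factorial : ℝ) / (k.factorial * (k + ν + 1).factorial)) =
      ∑ j ∈ Finset.range (n + 1),
        ((j.factorial : ℝ))⁻¹ * PowerSeries.coeff n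
          ((PowerSeries.mk fun p =>
            if p = 0 then (0 : ℝ) else (-1) ^ (p + 1) / p * zeta2 p * 4 ^ p) ^ j))
    (b : ℕ → ℝ)
    (hb : (PowerSeries.mk fun n =>
        if n = 0 then (0 : ℝ) else b n / (((ν + n).factorial : ℝ) * ((n - 1).factorial : ℝ))) =
      (PowerSeries.C (1 / ((ν + 1).factorial : ℝ)) * PowerSeries.X) *
        (PowerSeries.C (1 / ((ν : ℝ) + 1)) * besselNumer ν * (besselDenom ν)⁻¹ - 2)) :
    (∀ n : ℕ, 2 ≤ n →
      b n = (-1) ^ n * (((n + ν).factorial : ℝ) * ((n - 1).factorial : ℝ)) /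
        (((ν + 1).factorial : ℝ) * ((ν : ℝ) + 1)) * 2 ^ (2 * n - 2) * zeta2 (n - 1)) ∧
    b 2 = 1 / ((ν : ℝ) + 1) := by
  classical
  set L : PowerSeries ℝ := PowerSeries.mk fun p =>
    if p = 0 then (0 : ℝ) else (-1) ^ (p + 1) / p * zeta2 p * 4 ^ p with hLdef
  set G : PowerSeries ℝ := besselDenom ν with hGdef
  have hν1 : ((ν : ℝ) + 1) ≠ 0 := by positivity
  have hfac : ∀ m : ℕ, ((m.factorial : ℝ)) ≠ 0 := fun m => by positivity
  have hL0 : PowerSeries.constantCoeff L = 0 := by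
    rw [hLdef, PowerSeries.constantCoeff_mk]
    simp
  -- S = C ((ν+1)!) * G and its derivative identity
  have hS : (PowerSeries.mk fun k =>
      ((ν + 1).factorial : ℝ) / (k.factorial * (k + ν + 1).factorial)) =
      PowerSeries.C (((ν + 1).factorial : ℝ)) * G := by
    ext k
    rw [PowerSeries.coeff_mk, PowerSeries.coeff_C_mul, hGdef]
    rw [besselDenom, PowerSeries.coeff_mk]
    rw [mul_one_div]
  have hdS := exp_deriv_core hL0 (fun n => hlog n)
  rw [hS] at hdS
  have hdG : PowerSeries.derivative ℝ G = PowerSeries.derivative ℝ L * G := by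
    have hCne : PowerSeries.C (((ν + 1).factorial : ℝ)) ≠ 0 := by
      intro h
      apply hfac (ν + 1)
      have := congrArg (PowerSeries.constantCoeff) h
      simpa using this
    apply mul_left_cancel₀ hCne
    have h1 : PowerSeries.derivative ℝ (PowerSeries.C (((ν + 1).factorial : ℝ)) * G) =
        PowerSeries.C (((ν + 1).factorial : ℝ)) * PowerSeries.derivative ℝ G := by
      rw [← PowerSeries.smul_eq_C_mul, Derivation.map_smul, PowerSeries.smul_eq_C_mul]
    rw [← h1, hdS]
    ring
  -- the Bessel recurrence F = (ν+1) G + X G'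
  have hFG : besselNumer ν = PowerSeries.C ((ν : ℝ) + 1) * G +
      PowerSeries.X * PowerSeries.derivative ℝ G := by
    ext k
    rw [map_add, PowerSeries.coeff_C_mul]
    cases k with
    | zero =>
      rw [besselNumer, PowerSeries.coeff_mk]
      have hx : PowerSeries.coeff 0 (PowerSeries.X * PowerSeries.derivative ℝ G) = 0 := by
        rw [PowerSeries.coeff_zero_eq_constantCoeff, map_mul, PowerSeries.constantCoeff_X,
          zero_mul]
      rw [hx, add_zero, hGdef, besselDenom, PowerSeries.coeff_mk]
      have : ((ν + 1).factorial : ℝ) = ((ν : ℝ) + 1) * (ν.factorial : ℝ) := by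
        rw [Nat.factorial_succ]; push_cast; ring
      simp only [Nat.zero_add, zero_add]
      rw [this]
      field_simp
    | succ k =>
      rw [PowerSeries.coeff_succ_X_mul, PowerSeries.coeff_derivative]
      rw [besselNumer, PowerSeries.coeff_mk, hGdef, besselDenom, PowerSeries.coeff_mk]
      have hfs1 : ((k + 1 + ν + 1).factorial : ℝ) =
          ((k : ℝ) + 1 + ν + 1) * ((k + 1 + ν).factorial : ℝ) := by
        rw [Nat.factorial_succ]; push_cast; ring
      rw [hfs1]
      have h2 := hfac (k + 1)
      have h3 := hfac (k + 1 + ν)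
      have h4 : ((k : ℝ) + 1 + ν + 1) ≠ 0 := by positivity
      field_simp
      ring
  -- compute the quotient
  have hinvG : G * G⁻¹ = 1 := by
    apply PowerSeries.mul_inv_cancel
    rw [hGdef, besselDenom, PowerSeries.constantCoeff_mk]
    simp only [Nat.zero_add, zero_add]
    positivity
  have hquot : PowerSeries.C (1 / ((ν : ℝ) + 1)) * besselNumer ν * G⁻¹ - 2 =
      -1 + PowerSeries.C (1 / ((ν : ℝ) + 1)) * (PowerSeries.X * PowerSeries.derivative ℝ L) := by
    have step : PowerSeries.C (1 / ((ν : ℝ) + 1)) * besselNumer ν * G⁻¹ =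
        PowerSeries.C (1 / ((ν : ℝ) + 1)) *
          (PowerSeries.C ((ν : ℝ) + 1) + PowerSeries.X * PowerSeries.derivative ℝ L) *
          (G * G⁻¹) := by
      rw [hFG, hdG]; ring
    rw [step, hinvG, mul_one, mul_add, ← map_mul]
    rw [one_div_mul_cancel hν1, map_one]
    ring
  rw [hquot] at hb
  -- coefficient extraction
  have hcoeff : ∀ m : ℕ, b (m + 2) / (((ν + (m + 2)).factorial : ℝ) * ((m + 1).factorial : ℝ)) =
      (1 / ((ν + 1).factorial : ℝ)) * (1 / ((ν : ℝ) + 1)) *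
        ((if m + 1 = 0 then (0:ℝ) else (-1) ^ (m + 1 + 1) / (m + 1) * zeta2 (m + 1) * 4 ^ (m + 1))
          * ((m : ℝ) + 1 + 1 - 1)) := by
    intro m
    have := congrArg (PowerSeries.coeff (m + 2)) hb
    rw [PowerSeries.coeff_mk] at this
    simp only [show m + 2 ≠ 0 from by omega, if_false] at this
    have hrw : (PowerSeries.C (1 / ((ν + 1).factorial : ℝ)) * PowerSeries.X) *
        (-1 + PowerSeries.C (1 / ((ν : ℝ) + 1)) *
          (PowerSeries.X * PowerSeries.derivative ℝ L)) =
        PowerSeries.C (1 / ((ν + 1).factorial : ℝ)) * PowerSeries.C (1 / ((ν : ℝ) + 1)) *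
          (PowerSeries.X ^ 2 * PowerSeries.derivative ℝ L) -
        PowerSeries.C (1 / ((ν + 1).factorial : ℝ)) * PowerSeries.X := by
      ring
    rw [hrw, map_sub, ← map_mul, PowerSeries.coeff_C_mul, PowerSeries.coeff_C_mul] at this
    rw [PowerSeries.coeff_X_pow_mul] at this
    rw [PowerSeries.coeff_derivative, hLdef, PowerSeries.coeff_mk] at this
    rw [PowerSeries.coeff_X, if_neg (by omega : ¬ m + 2 = 1), mul_zero, sub_zero] at this
    rw [show m + 2 - 1 = m + 1 from by omega] at this
    push_cast at this ⊢
    rw [this]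
    ring
  have key : ∀ n : ℕ, 2 ≤ n →
      b n = (-1) ^ n * (((n + ν).factorial : ℝ) * ((n - 1).factorial : ℝ)) /
        (((ν + 1).factorial : ℝ) * ((ν : ℝ) + 1)) * 2 ^ (2 * n - 2) * zeta2 (n - 1) := by
    intro n hn
    obtain ⟨m, rfl⟩ : ∃ m, n = m + 2 := ⟨n - 2, by omega⟩
    have h := hcoeff m
    rw [if_neg (by omega : ¬ m + 1 = 0)] at h
    have hm1 : ((m : ℝ) + 1) ≠ 0 := by positivity
    have hd : (((ν + (m + 2)).factorial : ℝ) * ((m + 1).factorial : ℝ)) ≠ 0 :=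
      mul_ne_zero (hfac _) (hfac _)
    rw [div_eq_iff hd] at h
    rw [h]
    rw [show m + 2 - 1 = m + 1 from by omega, show 2 * (m + 2) - 2 = 2 * (m + 1) from by omega]
    rw [show m + 2 + ν = ν + (m + 2) from by omega]
    rw [pow_mul]
    norm_num
    field_simp
  refine ⟨key, ?_⟩
  -- value of zeta2 1
  have hz1 : zeta2 1 = 1 / (4 * ((ν : ℝ) + 2)) := by
    have h := hlog 1
    rw [PowerSeries.coeff_mk] at h
    rw [Finset.sum_range_succ, Finset.sum_range_one] at h
    rw [pow_zero, pow_one] at h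
    rw [PowerSeries.coeff_one, if_neg (by omega : ¬ (1:ℕ) = 0), mul_zero, zero_add] at h
    rw [hLdef, PowerSeries.coeff_mk, if_neg (by omega : ¬ (1:ℕ) = 0)] at h
    simp only [Nat.factorial_one, Nat.cast_one, inv_one, one_mul] at h
    have hfs : ((1 + ν + 1).factorial : ℝ) = ((ν : ℝ) + 2) * ((ν + 1).factorial : ℝ) := by
      rw [show 1 + ν + 1 = (ν + 1) + 1 from by omega, Nat.factorial_succ]
      push_cast; ring
    rw [hfs] at h
    norm_num at h
    have hν2 : ((ν : ℝ) + 2) ≠ 0 := by positivity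
    rw [div_eq_iff (mul_ne_zero hν2 (hfac (ν + 1)))] at h
    have h' : zeta2 1 * (4 * ((ν : ℝ) + 2)) * (((ν + 1).factorial : ℝ)) =
        1 * (((ν + 1).factorial : ℝ)) := by linear_combination -h
    have h'' := mul_right_cancel₀ (hfac (ν + 1)) h'
    rw [eq_div_iff (by positivity : 4 * ((ν : ℝ) + 2) ≠ 0)]
    linarith [h'']
  have h2 := key 2 (le_refl 2)
  rw [h2, hz1]
  norm_num
  have hfs2 : ((2 + ν).factorial : ℝ) = ((ν : ℝ) + 2) * ((ν + 1).factorial : ℝ) := by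
    rw [show 2 + ν = (ν + 1) + 1 from by omega, Nat.factorial_succ]
    push_cast; ring
  rw [hfs2]
  have hν2 : ((ν : ℝ) + 2) ≠ 0 := by positivity
  field_simp
end
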